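/- arXiv:2605.25295 — 5 statements merged into one kernel-verified Lean document; each statement's English description precedes it below -/
import Mathlib

section
/- The splitting probability integral converges to a Heaviside-type step function as n → ∞: for every fixed λ with 0 < λ < 1, lim_{n→∞} Sp(λ, n) = 1; for λ = 1, Sp(1, n) = 1/2 for every n; and for every fixed λ > 1, lim_{n→∞} Sp(λ, n) = 0. -/
open MeasureTheory Filter

lemma key_integral {b : ℝ} (hb : 0 < b) :
    ∫ w in Set.Ioi (0:ℝ), Real.exp (-b * w) = b⁻¹ := by
  have := integral_exp_neg_mul_rpow (p := 1) (b := b) one_pos hb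
  simp only [Real.rpow_one] at this
  rw [this]
  norm_num [Real.Gamma_two, Real.rpow_neg_one]

lemma meas_aux (c a p : ℝ) :
    AEStronglyMeasurable (fun w : ℝ => Real.exp (-c * (w + a * w ^ p)))
      (volume.restrict (Set.Ioi 0)) := by
  apply ContinuousOn.aestronglyMeasurable _ measurableSet_Ioi
  apply ContinuousOn.rexp
  apply ContinuousOn.mul continuousOn_const
  apply ContinuousOn.add continuousOn_id
  apply ContinuousOn.mul continuousOn_const
  intro w hw
  exact ((Real.continuousAt_rpow_const w p (Or.inl (ne_of_gt hw))).continuousWithinAt)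

lemma dct_zero {c p : ℝ} (hc : 0 < c) {a : ℕ → ℝ} (ha : ∀ n, 0 ≤ a n)
    (hlim : Tendsto a atTop (nhds 0)) :
    Tendsto (fun n : ℕ => ∫ w in Set.Ioi (0:ℝ), Real.exp (-c * (w + a n * w ^ p)))
      atTop (nhds c⁻¹) := by
  have hInt : Tendsto
      (fun n : ℕ => ∫ w in Set.Ioi (0:ℝ), Real.exp (-c * (w + a n * w ^ p)))
      atTop (nhds (∫ w in Set.Ioi (0:ℝ), Real.exp (-c * w))) := by
    refine tendsto_integral_of_dominated_convergence (fun w => Real.exp (-c * w))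
      (fun n => meas_aux c (a n) p) (exp_neg_integrableOn_Ioi 0 hc) ?_ ?_
    · intro n
      filter_upwards [ae_restrict_mem measurableSet_Ioi] with w hw
      rw [Real.norm_eq_abs, Real.abs_exp]
      apply Real.exp_le_exp.2
      have hwp : (0:ℝ) ≤ w ^ p := Real.rpow_nonneg (le_of_lt hw) _
      have hnn : (0:ℝ) ≤ a n * w ^ p := mul_nonneg (ha n) hwp
      nlinarith
    · filter_upwards [ae_restrict_mem measurableSet_Ioi] with w hw
      have h1 : Tendsto (fun n : ℕ => -c * (w + a n * w ^ p))
          atTop (nhds (-c * (w + 0 * w ^ p))) :=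
        (((hlim.mul_const _).const_add w).const_mul (-c))
      have h2 := (Real.continuous_exp.tendsto _).comp h1
      simpa [Function.comp_def] using h2
  rwa [key_integral hc] at hInt

lemma dct_infty {c p : ℝ} (hc : 0 < c) {a : ℕ → ℝ} (ha : ∀ n, 0 ≤ a n)
    (hlim : Tendsto a atTop atTop) :
    Tendsto (fun n : ℕ => ∫ w in Set.Ioi (0:ℝ), Real.exp (-c * (w + a n * w ^ p)))
      atTop (nhds 0) := by
  have hInt : Tendsto
      (fun n : ℕ => ∫ w in Set.Ioi (0:ℝ), Real.exp (-c * (w + a n * w ^ p)))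
      atTop (nhds (∫ w in Set.Ioi (0:ℝ), (0:ℝ))) := by
    refine tendsto_integral_of_dominated_convergence (fun w => Real.exp (-c * w))
      (fun n => meas_aux c (a n) p) (exp_neg_integrableOn_Ioi 0 hc) ?_ ?_
    · intro n
      filter_upwards [ae_restrict_mem measurableSet_Ioi] with w hw
      rw [Real.norm_eq_abs, Real.abs_exp]
      apply Real.exp_le_exp.2
      have hwp : (0:ℝ) ≤ w ^ p := Real.rpow_nonneg (le_of_lt hw) _
      have hnn : (0:ℝ) ≤ a n * w ^ p := mul_nonneg (ha n) hwp
      nlinarith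
    · filter_upwards [ae_restrict_mem measurableSet_Ioi] with w hw
      have hwp : (0:ℝ) < w ^ p := Real.rpow_pos_of_pos hw _
      have h1 : Tendsto (fun n : ℕ => a n * w ^ p) atTop atTop :=
        hlim.atTop_mul_const hwp
      have h2 : Tendsto (fun n : ℕ => w + a n * w ^ p) atTop atTop :=
        tendsto_atTop_add_const_left _ w h1
      have h3 : Tendsto (fun n : ℕ => -c * (w + a n * w ^ p)) atTop atBot := by
        simp only [neg_mul]
        exact tendsto_neg_atTop_atBot.comp (h2.const_mul_atTop hc)
      exact Real.tendsto_exp_atBot.comp h3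
  simpa using hInt

/-- The splitting probability integral
`Sp(λ, n) = π^(-1/2) ∫_0^∞ exp(-π^(-1/2) (w + λ n^(1 - 1/λ²) w^(1/λ²))) dw`. -/
noncomputable def Sp (l : ℝ) (n : ℕ) : ℝ :=
  (Real.sqrt Real.pi)⁻¹ *
    ∫ w in Set.Ioi (0 : ℝ),
      Real.exp (-(Real.sqrt Real.pi)⁻¹ *
        (w + l * (n : ℝ) ^ (1 - 1 / l ^ 2) * w ^ (1 / l ^ 2)))

/-- As `n → ∞`, the splitting probability converges to a Heaviside-type step function of
`λ`: it tends to `1` for `0 < λ < 1`, equals `1/2` for `λ = 1` (for every `n ≥ 1`), and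
tends to `0` for `λ > 1`. -/
theorem stmt8 (l : ℝ) :
    (0 < l → l < 1 → Tendsto (fun n : ℕ => Sp l n) atTop (nhds 1)) ∧
    (l = 1 → ∀ n : ℕ, 1 ≤ n → Sp l n = 1 / 2) ∧
    (1 < l → Tendsto (fun n : ℕ => Sp l n) atTop (nhds 0)) := by
  have hc : 0 < (Real.sqrt Real.pi)⁻¹ := inv_pos.2 (Real.sqrt_pos.2 Real.pi_pos)
  set c := (Real.sqrt Real.pi)⁻¹ with hcdef
  refine ⟨?_, ?_, ?_⟩
  · intro hl0 hl1
    have ha : ∀ n : ℕ, 0 ≤ l * (n : ℝ) ^ (1 - 1 / l ^ 2) := fun n =>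
      mul_nonneg hl0.le (Real.rpow_nonneg (Nat.cast_nonneg n) _)
    have he : 0 < 1 / l ^ 2 - 1 := by
      have h1 : l ^ 2 < 1 := by nlinarith
      have : 1 < 1 / l ^ 2 := (one_lt_div (by positivity)).2 h1
      linarith
    have hlim_a : Tendsto (fun n : ℕ => l * (n : ℝ) ^ (1 - 1 / l ^ 2)) atTop (nhds 0) := by
      have h := (tendsto_rpow_neg_atTop he).comp tendsto_natCast_atTop_atTop
      have h2 : Tendsto (fun n : ℕ => (n : ℝ) ^ (1 - 1 / l ^ 2)) atTop (nhds 0) := by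
        have heq : (fun n : ℕ => (n : ℝ) ^ (1 - 1 / l ^ 2)) =
            (fun n : ℕ => (n : ℝ) ^ (-(1 / l ^ 2 - 1))) := by
          funext n; ring_nf
        rw [heq]; exact h
      simpa using h2.const_mul l
    have hInt := dct_zero (p := 1 / l ^ 2) hc ha hlim_a
    have := hInt.const_mul c
    rw [mul_inv_cancel₀ hc.ne'] at this
    simpa [Sp] using this
  · intro hl n hn
    subst hl
    have hrw : ∀ w : ℝ,
        (-c * (w + 1 * (n : ℝ) ^ (1 - 1 / (1:ℝ) ^ 2) * w ^ (1 / (1:ℝ) ^ 2)))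
          = -(2 * c) * w := by
      intro w
      norm_num [Real.rpow_one]
      ring
    simp only [Sp, ← hcdef]
    simp_rw [hrw]
    rw [key_integral (by positivity)]
    rw [mul_inv]
    field_simp
  · intro hl1
    have hl0 : 0 < l := lt_trans one_pos hl1
    have ha : ∀ n : ℕ, 0 ≤ l * (n : ℝ) ^ (1 - 1 / l ^ 2) := fun n =>
      mul_nonneg hl0.le (Real.rpow_nonneg (Nat.cast_nonneg n) _)
    have he : 0 < 1 - 1 / l ^ 2 := by
      have h1 : 1 < l ^ 2 := by nlinarith
      have : 1 / l ^ 2 < 1 := (div_lt_one (by positivity)).2 h1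
      linarith
    have hlim_a : Tendsto (fun n : ℕ => l * (n : ℝ) ^ (1 - 1 / l ^ 2)) atTop atTop := by
      have h := (tendsto_rpow_atTop he).comp tendsto_natCast_atTop_atTop
      exact h.const_mul_atTop hl0
    have hInt := dct_infty (p := 1 / l ^ 2) hc ha hlim_a
    have := hInt.const_mul c
    simpa [Sp] using this
end

section
/- For every fixed λ with 0 < λ < 1, the quantity (1 − Sp(λ, n)) · (n/√π)^{1/λ² − 1} converges to λ · Γ(1 + 1/λ²) as n → ∞, where Γ is the Gamma function; equivalently, Sp(λ, n) = 1 − λ·Γ(1 + 1/λ²)·(√π/n)^{1/λ² − 1}·(1 + o(1)) as n → ∞. -/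
open MeasureTheory Filter

open Set in
private lemma aux_tendsto (a : ℝ) {al : ℝ} (hal : 1 < al) :
    Tendsto (fun n : ℕ => (n:ℝ) ^ (al - 1) * (1 - Real.exp (-(a * (n:ℝ) ^ (1 - al)))))
      atTop (nhds a) := by
  have hf : HasDerivAt (fun s : ℝ => 1 - Real.exp (-(a * s))) a 0 := by
    have h1 : HasDerivAt (fun s : ℝ => -(a * s)) (-a) 0 := by
      simpa [Pi.neg_def] using ((hasDerivAt_id (0:ℝ)).const_mul a).neg
    simpa using (h1.exp).const_sub 1
  have hslope := hasDerivAt_iff_tendsto_slope.mp hf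
  have ht : Tendsto (fun n : ℕ => (n:ℝ) ^ (1 - al)) atTop (nhdsWithin 0 {(0:ℝ)}ᶜ) := by
    rw [tendsto_nhdsWithin_iff]
    constructor
    · have h := (tendsto_rpow_neg_atTop (y := al - 1) (by linarith)).comp
        tendsto_natCast_atTop_atTop
      simpa [neg_sub, Function.comp_def] using h
    · filter_upwards [eventually_ge_atTop 1] with n hn
      have hn0 : (0:ℝ) < n := by exact_mod_cast hn
      exact (Real.rpow_pos_of_pos hn0 _).ne'
  have htot := hslope.comp ht
  apply htot.congr'
  filter_upwards [eventually_ge_atTop 1] with n hn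
  have hn0 : (0:ℝ) < n := by exact_mod_cast hn
  have hpos : (0:ℝ) < (n:ℝ) ^ (1 - al) := Real.rpow_pos_of_pos hn0 _
  have hinv : (n:ℝ) ^ (al - 1) = ((n:ℝ) ^ (1 - al))⁻¹ := by
    rw [← Real.rpow_neg hn0.le, neg_sub]
  simp only [Function.comp, slope_def_field, hinv]
  rw [div_eq_inv_mul]
  simp

/-- Auxiliary integrand. -/
private noncomputable def Faux (c l al : ℝ) (n : ℕ) (w : ℝ) : ℝ :=
  c * (Real.exp (-(c * w)) - Real.exp (-(c * (w + l * (n:ℝ) ^ (1 - al) * w ^ al)))) *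
    ((n:ℝ) / Real.sqrt Real.pi) ^ (al - 1)

/-- For fixed `0 < λ < 1`, `(1 - Sp(λ, n)) (n/√π)^(1/λ² - 1) → λ Γ(1 + 1/λ²)` as `n → ∞`,
i.e. `Sp(λ, n) = 1 - λ Γ(1 + 1/λ²) (√π/n)^(1/λ² - 1) (1 + o(1))`. -/
theorem stmt9 (l : ℝ) (h0 : 0 < l) (h1 : l < 1) :
    Tendsto
      (fun n : ℕ => (1 - Sp l n) * ((n : ℝ) / Real.sqrt Real.pi) ^ (1 / l ^ 2 - 1))
      atTop (nhds (l * Real.Gamma (1 + 1 / l ^ 2))) := by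
  have hπ : 0 < Real.sqrt Real.pi := Real.sqrt_pos.mpr Real.pi_pos
  set c : ℝ := (Real.sqrt Real.pi)⁻¹ with hc
  have hc0 : 0 < c := inv_pos.mpr hπ
  set al : ℝ := 1 / l ^ 2 with hal
  have hal1 : 1 < al := by
    rw [hal, lt_div_iff₀ (by positivity)]
    nlinarith
  -- basic integrability facts
  have hexp_int : IntegrableOn (fun w => Real.exp (-(c * w))) (Set.Ioi (0:ℝ)) := by
    simpa [neg_mul] using exp_neg_integrableOn_Ioi 0 hc0
  have hexp_eval : ∫ w in Set.Ioi (0:ℝ), Real.exp (-(c * w)) = 1 / c := by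
    have h := Real.integral_rpow_mul_exp_neg_mul_Ioi (a := 1) (r := c) one_pos hc0
    simp only [Real.rpow_one, Real.Gamma_one, mul_one] at h
    rw [← h]
    refine (setIntegral_congr_fun measurableSet_Ioi fun t ht => ?_).symm
    simp
  have hpow_int : IntegrableOn (fun w => w ^ al * Real.exp (-(c * w))) (Set.Ioi (0:ℝ)) := by
    have h := integrableOn_rpow_mul_exp_neg_mul_rpow (p := 1) (s := al) (b := c)
      (by linarith) one_pos hc0
    refine h.congr_fun (fun x hx => ?_) measurableSet_Ioi
    beta_reduce
    rw [Real.rpow_one, neg_mul]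
  have hpow_eval : ∫ w in Set.Ioi (0:ℝ), w ^ al * Real.exp (-(c * w))
      = (1/c) ^ (al+1) * Real.Gamma (al+1) := by
    have h := Real.integral_rpow_mul_exp_neg_mul_Ioi (a := al + 1) (r := c)
      (by linarith) hc0
    rw [← h]
    refine setIntegral_congr_fun measurableSet_Ioi fun t ht => ?_
    norm_num
  have hmeas : ∀ n : ℕ, Measurable fun w : ℝ =>
      Real.exp (-(c * (w + l * (n:ℝ) ^ (1 - al) * w ^ al))) := by
    intro n
    have hmp : Measurable fun w : ℝ => w ^ al :=
      (Real.continuous_rpow_const (by linarith)).measurable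
    exact ((measurable_id.add (hmp.const_mul (l * (n:ℝ) ^ (1 - al)))).const_mul c).neg.exp
  have hint2 : ∀ n : ℕ, IntegrableOn
      (fun w => Real.exp (-(c * (w + l * (n:ℝ) ^ (1 - al) * w ^ al)))) (Set.Ioi (0:ℝ)) := by
    intro n
    refine hexp_int.mono' ((hmeas n).aestronglyMeasurable) ?_
    filter_upwards [ae_restrict_mem measurableSet_Ioi] with w hw
    rw [Real.norm_eq_abs, abs_of_pos (Real.exp_pos _)]
    apply Real.exp_le_exp.mpr
    have hz : 0 ≤ l * (n:ℝ) ^ (1 - al) * w ^ al := by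
      have hw0 : (0:ℝ) < w := hw
      positivity
    nlinarith
  -- the dominating / limiting function
  set g : ℝ → ℝ := fun w =>
    c * l * c * (Real.sqrt Real.pi) ^ (1 - al) * (w ^ al * Real.exp (-(c * w))) with hg
  have hg_int : IntegrableOn g (Set.Ioi (0:ℝ)) := hpow_int.const_mul _
  have hsq : Real.sqrt Real.pi * Real.sqrt Real.pi = Real.pi :=
    Real.mul_self_sqrt Real.pi_pos.le
  have hrw : (Real.sqrt Real.pi) ^ (1 - al) * (Real.sqrt Real.pi) ^ (1 + al) = Real.pi := by
    rw [← Real.rpow_add hπ]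
    have h2 : (1 - al) + (1 + al) = 2 := by ring
    rw [h2, show (2:ℝ) = ((2:ℕ):ℝ) by norm_num, Real.rpow_natCast]
    simpa [sq] using hsq
  have hgint : ∫ w in Set.Ioi (0:ℝ), g w = l * Real.Gamma (1 + al) := by
    simp only [hg]
    rw [integral_const_mul, hpow_eval]
    have h1c : 1 / c = Real.sqrt Real.pi := by rw [hc, one_div, inv_inv]
    rw [h1c, add_comm al 1]
    have h2 : c * c * Real.pi = 1 := by
      rw [hc, ← mul_inv, hsq]
      exact inv_mul_cancel₀ Real.pi_pos.ne'
    linear_combination (l * Real.Gamma (1 + al) * c * c) * hrw +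
      (l * Real.Gamma (1 + al)) * h2
  -- rewriting 1 - Sp as an integral
  have heq : ∀ n : ℕ, 1 ≤ n →
      (1 - Sp l n) * ((n:ℝ) / Real.sqrt Real.pi) ^ (al - 1)
        = ∫ w in Set.Ioi (0:ℝ), Faux c l al n w := by
    intro n hn
    have hSp : Sp l n = c * ∫ w in Set.Ioi (0:ℝ),
        Real.exp (-(c * (w + l * (n:ℝ) ^ (1 - al) * w ^ al))) := by
      simp only [Sp, neg_mul, ← hc, ← hal]
    have h2 : ∫ w in Set.Ioi (0:ℝ), Faux c l al n w
        = (c * ∫ w in Set.Ioi (0:ℝ),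
            (Real.exp (-(c * w)) - Real.exp (-(c * (w + l * (n:ℝ) ^ (1 - al) * w ^ al)))))
          * ((n:ℝ) / Real.sqrt Real.pi) ^ (al - 1) := by
      simp only [Faux]
      rw [integral_mul_const, integral_const_mul]
    rw [h2, integral_sub hexp_int (hint2 n), hexp_eval, hSp,
      mul_sub, mul_one_div, div_self hc0.ne']
  -- dominated convergence
  have hDCT : Tendsto (fun n : ℕ => ∫ w in Set.Ioi (0:ℝ), Faux c l al n w) atTop
      (nhds (∫ w in Set.Ioi (0:ℝ), g w)) := by
    refine tendsto_integral_filter_of_dominated_convergence g ?_ ?_ hg_int ?_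
    · refine Eventually.of_forall fun n => Measurable.aestronglyMeasurable ?_
      apply Measurable.mul
      · exact (measurable_const.mul
          (((Real.measurable_exp.comp (measurable_id.const_mul c).neg)).sub (hmeas n)))
      · exact measurable_const
    · filter_upwards [eventually_ge_atTop 1] with n hn
      filter_upwards [ae_restrict_mem measurableSet_Ioi] with w hw
      have hw0 : (0:ℝ) < w := hw
      have hn0 : (0:ℝ) < n := by exact_mod_cast hn
      set z : ℝ := l * (n:ℝ) ^ (1 - al) * w ^ al with hz
      have hz0 : 0 ≤ z := by positivity
      have hsplit : Real.exp (-(c * (w + z)))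
          = Real.exp (-(c * w)) * Real.exp (-(c * z)) := by
        rw [← Real.exp_add]; ring_nf
      have hK : ((n:ℝ) / Real.sqrt Real.pi) ^ (al - 1)
          = (n:ℝ) ^ (al - 1) * (Real.sqrt Real.pi) ^ (1 - al) := by
        rw [Real.div_rpow hn0.le hπ.le, div_eq_mul_inv, ← Real.rpow_neg hπ.le, neg_sub]
      have hnn : (n:ℝ) ^ (al - 1) * (n:ℝ) ^ (1 - al) = 1 := by
        rw [← Real.rpow_add hn0]
        norm_num
      have hle1 : Real.exp (-(c * z)) ≤ 1 :=
        Real.exp_le_one_iff.mpr (by nlinarith)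
      have hge : 1 - Real.exp (-(c * z)) ≤ c * z := by
        have := Real.add_one_le_exp (-(c * z))
        linarith
      have hFval : Faux c l al n w
          = c * Real.exp (-(c * w)) * (1 - Real.exp (-(c * z)))
            * ((n:ℝ) ^ (al - 1) * (Real.sqrt Real.pi) ^ (1 - al)) := by
        simp only [Faux, ← hz, hsplit, ← hK]; ring
      have hF0 : 0 ≤ Faux c l al n w := by
        rw [hFval]
        have h1 : 0 ≤ 1 - Real.exp (-(c * z)) := by linarith
        positivity
      rw [Real.norm_eq_abs, abs_of_nonneg hF0, hFval]
      have hbig : c * Real.exp (-(c * w)) * (1 - Real.exp (-(c * z)))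
            * ((n:ℝ) ^ (al - 1) * (Real.sqrt Real.pi) ^ (1 - al))
          ≤ c * Real.exp (-(c * w)) * (c * z)
            * ((n:ℝ) ^ (al - 1) * (Real.sqrt Real.pi) ^ (1 - al)) := by
        have hcoef : 0 ≤ c * Real.exp (-(c * w))
            * ((n:ℝ) ^ (al - 1) * (Real.sqrt Real.pi) ^ (1 - al)) := by positivity
        nlinarith [hge, hcoef]
      refine hbig.trans (le_of_eq ?_)
      simp only [hg, hz]
      linear_combination (c * Real.exp (-(c * w)) * c * l * w ^ al
        * (Real.sqrt Real.pi) ^ (1 - al)) * hnn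
    · filter_upwards [ae_restrict_mem measurableSet_Ioi] with w hw
      have hw0 : (0:ℝ) < w := hw
      have haux := (aux_tendsto (c * l * w ^ al) hal1).const_mul
        (c * Real.exp (-(c * w)) * (Real.sqrt Real.pi) ^ (1 - al))
      have hlim_val : c * Real.exp (-(c * w)) * (Real.sqrt Real.pi) ^ (1 - al)
          * (c * l * w ^ al) = g w := by
        simp only [hg]; ring
      rw [hlim_val] at haux
      refine haux.congr fun n => ?_
      by_cases hn : n = 0
      · subst hn
        have h01 : (0:ℝ) ^ (al - 1) = 0 := Real.zero_rpow (by linarith)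
        simp [Faux, zero_div, h01, Real.zero_rpow (show al - 1 ≠ 0 by linarith)]
      · have hn0 : (0:ℝ) < n := by
          exact_mod_cast Nat.pos_of_ne_zero hn
        have hK : ((n:ℝ) / Real.sqrt Real.pi) ^ (al - 1)
            = (n:ℝ) ^ (al - 1) * (Real.sqrt Real.pi) ^ (1 - al) := by
          rw [Real.div_rpow hn0.le hπ.le, div_eq_mul_inv, ← Real.rpow_neg hπ.le, neg_sub]
        have hsplit : Real.exp (-(c * (w + l * (n:ℝ) ^ (1 - al) * w ^ al)))
            = Real.exp (-(c * w)) * Real.exp (-(c * (l * (n:ℝ) ^ (1 - al) * w ^ al))) := by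
          rw [← Real.exp_add]; ring_nf
        have harg : c * (l * (n:ℝ) ^ (1 - al) * w ^ al)
            = c * l * w ^ al * (n:ℝ) ^ (1 - al) := by ring
        simp only [Faux, hsplit, hK, harg]
        ring
  rw [hgint] at hDCT
  refine hDCT.congr' ?_
  filter_upwards [eventually_ge_atTop 1] with n hn
  exact (heq n hn).symm
end

section
/- For every fixed λ > 1, the quantity Sp(λ, n) · (nλ/√π)^{λ² − 1} converges to λ · Γ(λ²) as n → ∞, where Γ is the Gamma function; equivalently, Sp(λ, n) = λ·Γ(λ²)·(√π/(nλ))^{λ² − 1}·(1 + o(1)) as n → ∞. -/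
open MeasureTheory Filter
open Set

/-- Change of variables `w = (t/a)^p` in the splitting-probability integral. -/
lemma key_cov {a c p : ℝ} (ha : 0 < a) (hp : 0 < p) :
    ∫ w in Ioi (0:ℝ), Real.exp (-(c * w + a * w ^ (1/p)))
      = p * a ^ (-p) *
        ∫ t in Ioi (0:ℝ), Real.exp (-(c * (t/a) ^ p)) * (Real.exp (-t) * t ^ (p-1)) := by
  have h1 : ∫ w in Ioi (0:ℝ), Real.exp (-(c * w + a * w ^ (1/p)))
      = ∫ x in Ioi (0:ℝ), (p * x ^ (p-1)) •
          Real.exp (-(c * (x ^ p) + a * (x ^ p) ^ (1/p))) :=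
    (integral_comp_rpow_Ioi_of_pos hp (g := fun w => Real.exp (-(c * w + a * w ^ (1/p))))).symm
  rw [h1]
  have h2 : ∫ x in Ioi (0:ℝ), (p * x ^ (p-1)) •
        Real.exp (-(c * (x ^ p) + a * (x ^ p) ^ (1/p)))
      = a⁻¹ • ∫ t in Ioi (0:ℝ), (p * (t/a) ^ (p-1)) •
          Real.exp (-(c * ((t/a) ^ p) + a * (((t/a) ^ p) ^ (1/p)))) := by
    have := integral_comp_mul_left_Ioi
      (fun x : ℝ => (p * x ^ (p-1)) • Real.exp (-(c * (x ^ p) + a * ((x ^ p) ^ (1/p)))))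
      0 (inv_pos.mpr ha)
    simp only [mul_zero, inv_inv, inv_mul_eq_div] at this
    rw [this, smul_smul, inv_mul_cancel₀ ha.ne', one_smul]
  rw [h2]
  rw [← integral_smul, ← integral_const_mul]
  refine setIntegral_congr_fun measurableSet_Ioi (fun t ht => ?_)
  have ht0 : (0:ℝ) < t := ht
  have hta : (0:ℝ) < t / a := div_pos ht0 ha
  have hxp : ((t/a) ^ p) ^ (1/p) = t / a := by
    rw [← Real.rpow_mul hta.le, mul_one_div, div_self hp.ne', Real.rpow_one]
  have hdiv : (t/a) ^ (p-1) = t ^ (p-1) / a ^ (p-1) := Real.div_rpow ht0.le ha.le (p-1)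
  have haxp : a * (t/a) = t := by field_simp
  simp only [smul_eq_mul, hxp, haxp, hdiv]
  have hap : (0:ℝ) < a ^ p := Real.rpow_pos_of_pos ha p
  rw [Real.rpow_neg ha.le, Real.rpow_sub ha, Real.rpow_one, neg_add, Real.exp_add]
  field_simp

/-- Dominated convergence for the rescaled integral. -/
lemma J_tendsto {c p : ℝ} (hc : 0 ≤ c) (hp : 0 < p) {A : ℕ → ℝ} (hA0 : ∀ n, 0 ≤ A n)
    (hA : Filter.Tendsto A atTop atTop) :
    Filter.Tendsto
      (fun n => ∫ t in Ioi (0:ℝ),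
        Real.exp (-(c * (t / A n) ^ p)) * (Real.exp (-t) * t ^ (p-1)))
      atTop (nhds (Real.Gamma p)) := by
  rw [Real.Gamma_eq_integral hp]
  refine tendsto_integral_of_dominated_convergence
    (fun t => Real.exp (-t) * t ^ (p-1)) (fun n => ?_)
    (Real.GammaIntegral_convergent hp) (fun n => ?_) ?_
  · -- measurability
    have m1 : ContinuousOn (fun t : ℝ => Real.exp (-(c * (t / A n) ^ p))) (Ioi 0) :=
      Real.continuous_exp.comp_continuousOn
        ((continuousOn_const.mul ((continuousOn_id.div_const (A n)).rpow_const
          fun x _ => Or.inr hp.le)).neg)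
    have m2 : ContinuousOn (fun t : ℝ => Real.exp (-t) * t ^ (p-1)) (Ioi 0) :=
      (Real.continuous_exp.comp continuous_neg).continuousOn.mul
        (continuousOn_id.rpow_const fun x hx => Or.inl (ne_of_gt hx))
    exact (m1.mul m2).aestronglyMeasurable measurableSet_Ioi
  · -- bound
    filter_upwards [ae_restrict_mem measurableSet_Ioi] with t ht
    have ht0 : (0:ℝ) < t := ht
    have hx : 0 ≤ c * (t / A n) ^ p :=
      mul_nonneg hc (Real.rpow_nonneg (div_nonneg ht0.le (hA0 n)) p)
    have hg : 0 ≤ Real.exp (-t) * t ^ (p-1) :=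
      mul_nonneg (Real.exp_pos _).le (Real.rpow_nonneg ht0.le _)
    rw [Real.norm_eq_abs, abs_of_nonneg (mul_nonneg (Real.exp_pos _).le hg)]
    calc Real.exp (-(c * (t / A n) ^ p)) * (Real.exp (-t) * t ^ (p-1))
        ≤ 1 * (Real.exp (-t) * t ^ (p-1)) :=
          mul_le_mul_of_nonneg_right (Real.exp_le_one_iff.mpr (neg_nonpos.mpr hx)) hg
      _ = Real.exp (-t) * t ^ (p-1) := one_mul _
  · -- pointwise limit
    filter_upwards [ae_restrict_mem measurableSet_Ioi] with t ht
    have ht0 : (0:ℝ) < t := ht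
    have h2 : Filter.Tendsto (fun n => t / A n) atTop (nhds 0) :=
      tendsto_const_nhds.div_atTop hA
    have h3 : Filter.Tendsto (fun n => (t / A n) ^ p) atTop (nhds 0) := by
      have := ((Real.continuousAt_rpow_const 0 p (Or.inr hp.le)).tendsto).comp h2
      simpa [Real.zero_rpow hp.ne', Function.comp_def] using this
    have h3' : Filter.Tendsto (fun n => -(c * (t / A n) ^ p)) atTop (nhds 0) := by
      simpa using (h3.const_mul c).neg
    have h4 : Filter.Tendsto (fun n => Real.exp (-(c * (t / A n) ^ p))) atTop (nhds 1) := by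
      simpa [Function.comp_def] using (Real.continuous_exp.tendsto 0).comp h3'
    simpa using h4.mul_const (Real.exp (-t) * t ^ (p-1))

/-- For fixed `λ > 1`, `Sp(λ, n) (nλ/√π)^(λ² - 1) → λ Γ(λ²)` as `n → ∞`,
i.e. `Sp(λ, n) = λ Γ(λ²) (√π/(nλ))^(λ² - 1) (1 + o(1))`. -/
theorem stmt10 (l : ℝ) (h1 : 1 < l) :
    Tendsto
      (fun n : ℕ => Sp l n * ((n : ℝ) * l / Real.sqrt Real.pi) ^ (l ^ 2 - 1))
      atTop (nhds (l * Real.Gamma (l ^ 2))) := by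
  have hl0 : (0:ℝ) < l := lt_trans one_pos h1
  set p := l ^ 2 with hpdef
  have hp1 : (1:ℝ) < p := by nlinarith
  have hp0 : (0:ℝ) < p := lt_trans one_pos hp1
  have hπ : (0:ℝ) < Real.sqrt Real.pi := Real.sqrt_pos.mpr Real.pi_pos
  set c := (Real.sqrt Real.pi)⁻¹ with hcdef
  have hc : (0:ℝ) < c := inv_pos.mpr hπ
  have hcl : (0:ℝ) < c * l := mul_pos hc hl0
  set A : ℕ → ℝ := fun n => c * l * (n:ℝ) ^ (1 - 1/p) with hAdef
  have hA0 : ∀ n, 0 ≤ A n := fun n =>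
    mul_nonneg hcl.le (Real.rpow_nonneg (Nat.cast_nonneg n) _)
  have hexpos : (0:ℝ) < 1 - 1/p := sub_pos.mpr ((div_lt_one hp0).mpr hp1)
  have hA : Filter.Tendsto A atTop atTop := by
    refine Tendsto.const_mul_atTop hcl ?_
    exact (tendsto_rpow_atTop hexpos).comp tendsto_natCast_atTop_atTop
  have hmain := (J_tendsto hc.le hp0 hA0 hA).const_mul l
  refine hmain.congr' ?_
  filter_upwards [eventually_ge_atTop 1] with n hn
  have hN : (0:ℝ) < (n:ℝ) := by exact_mod_cast Nat.lt_of_lt_of_le Nat.zero_lt_one hn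
  have hAn : 0 < A n := mul_pos hcl (Real.rpow_pos_of_pos hN _)
  -- the constant identity
  have hconst : c * (p * (A n) ^ (-p)) * ((n:ℝ) * l / Real.sqrt Real.pi) ^ (p-1) = l := by
    have e1 : ((n:ℝ) * l / Real.sqrt Real.pi) = c * l * (n:ℝ) := by
      rw [div_eq_mul_inv, ← hcdef]; ring
    have e2 : (c * l * (n:ℝ)) ^ (p-1) = (c*l)^(p-1) * (n:ℝ)^(p-1) :=
      Real.mul_rpow hcl.le hN.le
    have e3 : (A n) ^ (-p) = (c*l)^(-p) * ((n:ℝ)^(1-1/p))^(-p) := by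
      rw [hAdef]; exact Real.mul_rpow hcl.le (Real.rpow_nonneg hN.le _)
    have e4 : ((n:ℝ)^(1-1/p))^(-p) = (n:ℝ)^(-(p-1)) := by
      rw [← Real.rpow_mul hN.le]
      congr 1
      field_simp
    have e5 : (c*l)^(-p) * (c*l)^(p-1) = (c*l)⁻¹ := by
      rw [← Real.rpow_add hcl]
      rw [show -p + (p-1) = (-1:ℝ) by ring, Real.rpow_neg_one]
    have e6 : (n:ℝ)^(-(p-1)) * (n:ℝ)^(p-1) = 1 := by
      rw [← Real.rpow_add hN]; simp
    rw [e1, e2, e3, e4]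
    calc c * (p * ((c*l)^(-p) * (n:ℝ)^(-(p-1)))) * ((c*l)^(p-1) * (n:ℝ)^(p-1))
        = c * p * ((c*l)^(-p) * (c*l)^(p-1)) * ((n:ℝ)^(-(p-1)) * (n:ℝ)^(p-1)) := by ring
      _ = c * p * (c*l)⁻¹ * 1 := by rw [e5, e6]
      _ = l := by rw [hpdef]; field_simp
  -- the integral identity
  have hSp : Sp l n = c * ∫ w in Ioi (0:ℝ), Real.exp (-(c * w + A n * w ^ (1/p))) := by
    rw [Sp, ← hcdef, ← hpdef]
    congr 1
    refine setIntegral_congr_fun measurableSet_Ioi (fun w _ => ?_)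
    rw [hAdef]
    congr 1
    ring
  rw [hSp, key_cov hAn hp0]
  calc l * ∫ t in Ioi (0:ℝ), Real.exp (-(c * (t / A n) ^ p)) * (Real.exp (-t) * t ^ (p-1))
      = (c * (p * (A n) ^ (-p)) * ((n:ℝ) * l / Real.sqrt Real.pi) ^ (p-1)) *
          ∫ t in Ioi (0:ℝ), Real.exp (-(c * (t / A n) ^ p)) * (Real.exp (-t) * t ^ (p-1)) := by
        rw [hconst]
    _ = c * (p * (A n) ^ (-p) *
          ∫ t in Ioi (0:ℝ), Real.exp (-(c * (t / A n) ^ p)) * (Real.exp (-t) * t ^ (p-1))) *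
          ((n:ℝ) * l / Real.sqrt Real.pi) ^ (p-1) := by ring
end

section
/- Boundary-layer behavior of the splitting probability near λ = 1: for every fixed real number X, the sequence Sp( 1 + X/log(n), n ) converges to 1/(1 + e^{2X}) as the natural number n tends to infinity (n ≥ 2 so that log n > 0). In particular the transition region of the splitting probability around λ = 1 has width of order 1/log(n). -/
open MeasureTheory Filter

open Real Set in
lemma integral_exp_neg_mul_Ioi_zero' {b : ℝ} (hb : 0 < b) :
    ∫ x in Ioi (0 : ℝ), Real.exp (-b * x) = b⁻¹ := by
  have h := integral_comp_mul_left_Ioi (fun x => Real.exp (-x)) 0 hb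
  simp only [mul_zero, integral_exp_neg_Ioi_zero, smul_eq_mul, mul_one] at h
  rw [← h]
  congr 1 with x
  ring_nf

open Real Set in
/-- Boundary-layer behavior near `λ = 1`: for every fixed `X ∈ ℝ`,
`Sp(1 + X / log n, n) → 1 / (1 + e^(2X))` as `n → ∞`, so the transition region of the
splitting probability around `λ = 1` has width of order `1 / log n`. -/
theorem stmt11 (X : ℝ) :
    Tendsto (fun n : ℕ => Sp (1 + X / Real.log n) n) atTop
      (nhds (1 / (1 + Real.exp (2 * X)))) := by
  set c : ℝ := (Real.sqrt Real.pi)⁻¹ with hc_def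
  have hc : 0 < c := inv_pos.2 (Real.sqrt_pos.2 Real.pi_pos)
  set l : ℕ → ℝ := fun n => 1 + X / Real.log n with hl_def
  -- log n → ∞
  have hlog : Tendsto (fun n : ℕ => Real.log n) atTop atTop :=
    Real.tendsto_log_atTop.comp tendsto_natCast_atTop_atTop
  -- X / log n → 0
  have hX0 : Tendsto (fun n : ℕ => X / Real.log n) atTop (nhds 0) :=
    Tendsto.div_atTop tendsto_const_nhds hlog
  -- l n → 1
  have hl : Tendsto l atTop (nhds 1) := by
    have := (tendsto_const_nhds : Tendsto (fun _ : ℕ => (1:ℝ)) atTop (nhds 1)).add hX0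
    simpa using this
  -- 1 / (l n)^2 → 1
  have hq : Tendsto (fun n => 1 / (l n) ^ 2) atTop (nhds 1) := by
    have h2 : Tendsto (fun n => (l n) ^ 2) atTop (nhds 1) := by
      simpa using hl.pow 2
    have := h2.inv₀ one_ne_zero
    simpa [one_div] using this
  -- eventually l n > 1/2 and log n > 0
  have hev : ∀ᶠ n : ℕ in atTop, (1:ℝ)/2 < l n ∧ 0 < Real.log n ∧ 1 ≤ n := by
    filter_upwards [hl.eventually (eventually_gt_nhds (by norm_num : (1:ℝ)/2 < 1)),
      hlog.eventually_gt_atTop 0, eventually_ge_atTop 1] with n h1 h2 h3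
    exact ⟨h1, h2, h3⟩
  -- (1 - 1/(l n)^2) * log n → 2X
  have hp : Tendsto (fun n => (1 - 1 / (l n) ^ 2) * Real.log n) atTop (nhds (2 * X)) := by
    have hg : Tendsto (fun n : ℕ => (2 * X + X ^ 2 / Real.log n) / (l n) ^ 2) atTop
        (nhds (2 * X)) := by
      have hnum : Tendsto (fun n : ℕ => 2 * X + X ^ 2 / Real.log n) atTop (nhds (2 * X)) := by
        have h0 : Tendsto (fun n : ℕ => X ^ 2 / Real.log n) atTop (nhds 0) :=
          Tendsto.div_atTop tendsto_const_nhds hlog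
        have := (tendsto_const_nhds : Tendsto (fun _ : ℕ => 2 * X) atTop (nhds (2 * X))).add h0
        simpa using this
      have hden : Tendsto (fun n => (l n) ^ 2) atTop (nhds 1) := by simpa using hl.pow 2
      have := hnum.div hden one_ne_zero
      simpa only [div_one, Pi.div_def] using this
    refine Tendsto.congr' ?_ hg
    filter_upwards [hev] with n ⟨h1, h2, _⟩
    have hln : l n ≠ 0 := ne_of_gt (lt_trans one_half_pos h1)
    have hlogn : Real.log n ≠ 0 := ne_of_gt h2
    have hexp : l n = 1 + X / Real.log n := rfl
    field_simp
    rw [hexp]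
    field_simp
    ring
  -- the pointwise limit function
  set f : ℝ → ℝ := fun w => Real.exp (-(c * (1 + Real.exp (2 * X))) * w) with hf_def
  -- the sequence of integrands
  set F : ℕ → ℝ → ℝ := fun n w =>
    Real.exp (-c * (w + l n * (n : ℝ) ^ (1 - 1 / (l n) ^ 2) * w ^ (1 / (l n) ^ 2))) with hF_def
  have key : Tendsto (fun n => ∫ w in Ioi (0:ℝ), F n w) atTop
      (nhds (∫ w in Ioi (0:ℝ), f w)) := by
    apply tendsto_integral_filter_of_dominated_convergence (fun w => Real.exp (-c * w))
    · -- measurability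
      filter_upwards with n
      apply ContinuousOn.aestronglyMeasurable _ measurableSet_Ioi
      apply ContinuousOn.rexp
      apply ContinuousOn.mul continuousOn_const
      apply ContinuousOn.add continuousOn_id
      apply ContinuousOn.mul continuousOn_const
      exact continuousOn_id.rpow_const fun x hx => Or.inl (ne_of_gt hx)
    · -- domination
      filter_upwards [hev] with n ⟨h1, _, _⟩
      rw [ae_restrict_iff' measurableSet_Ioi]
      filter_upwards with w hw
      have hw0 : (0:ℝ) < w := hw
      have hln0 : (0:ℝ) ≤ l n := (lt_trans one_half_pos h1).le
      have hs : 0 ≤ l n * (n : ℝ) ^ (1 - 1 / (l n) ^ 2) * w ^ (1 / (l n) ^ 2) :=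
        mul_nonneg (mul_nonneg hln0 (Real.rpow_nonneg (Nat.cast_nonneg n) _))
          (Real.rpow_nonneg hw0.le _)
      have : -c * (w + l n * (n : ℝ) ^ (1 - 1 / (l n) ^ 2) * w ^ (1 / (l n) ^ 2)) ≤ -c * w := by
        nlinarith
      simpa [hF_def, Real.abs_exp] using Real.exp_le_exp.2 this
    · exact exp_neg_integrableOn_Ioi 0 hc
    · -- pointwise limit
      rw [ae_restrict_iff' measurableSet_Ioi]
      filter_upwards with w
      intro hw
      have hw0 : (0:ℝ) < w := hw
      -- inner limit : l n * n^(p n) * w^(q n) → exp(2X) * w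
      have hinner : Tendsto (fun n : ℕ => l n * (n : ℝ) ^ (1 - 1 / (l n) ^ 2) * w ^ (1 / (l n) ^ 2))
          atTop (nhds (Real.exp (2 * X) * w)) := by
        have h1 : Tendsto (fun n : ℕ => (n : ℝ) ^ (1 - 1 / (l n) ^ 2)) atTop
            (nhds (Real.exp (2 * X))) := by
          refine Tendsto.congr' ?_ (hp.rexp)
          filter_upwards [hev] with n ⟨_, h2, _⟩
          rw [Real.rpow_def_of_pos (by positivity : (0:ℝ) < (n:ℝ)), mul_comm]
        have h2 : Tendsto (fun n => w ^ (1 / (l n) ^ 2)) atTop (nhds w) := by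
          have : Tendsto (fun n => Real.exp ((1 / (l n) ^ 2) * Real.log w)) atTop
              (nhds (Real.exp (1 * Real.log w))) := (hq.mul_const (Real.log w)).rexp
          rw [one_mul, Real.exp_log hw0] at this
          refine Tendsto.congr' ?_ this
          filter_upwards with n
          rw [Real.rpow_def_of_pos hw0, mul_comm]
        have := (hl.mul h1).mul h2
        simpa using this
      have : Tendsto (fun n => -c * (w + l n * (n : ℝ) ^ (1 - 1 / (l n) ^ 2)
          * w ^ (1 / (l n) ^ 2))) atTop (nhds (-c * (w + Real.exp (2 * X) * w))) :=
        tendsto_const_nhds.mul (tendsto_const_nhds.add hinner)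
      have hlim := this.rexp
      convert hlim using 2
      rw [hf_def]
      ring_nf
  -- compute the limit integral
  have hval : ∫ w in Ioi (0:ℝ), f w = (c * (1 + Real.exp (2 * X)))⁻¹ := by
    rw [hf_def]
    exact integral_exp_neg_mul_Ioi_zero' (by positivity)
  have final := key.const_mul c
  rw [hval] at final
  have : c * (c * (1 + Real.exp (2 * X)))⁻¹ = 1 / (1 + Real.exp (2 * X)) := by
    rw [mul_inv]
    field_simp
  rw [this] at final
  exact final
end

section
/- Slow-emission scaling limit of the mean fastest arrival time integral: lim_{a → 0⁺} a^{4/5} · ∫_0^∞ exp( −a² · u^{5/2} · e^{−1/u} ) du = (2/5)·Γ(2/5), where Γ is the Gamma function. Equivalently, after the substitution u = v / a^{4/5}, the integral ∫_0^∞ exp( −v^{5/2}·exp(−a^{4/5}/v) ) dv converges to ∫_0^∞ exp(−v^{5/2}) dv = (2/5)·Γ(2/5) as a → 0⁺. -/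
open MeasureTheory Filter

lemma stmt13_aux3 :
    ∫ v in Set.Ioi (0 : ℝ), Real.exp (-v ^ ((5 : ℝ) / 2)) =
      (2 / 5) * Real.Gamma (2 / 5) := by
  rw [integral_exp_neg_rpow (by norm_num : (0:ℝ) < 5/2),
    show (1:ℝ)/(5/2) = 2/5 by norm_num,
    Real.Gamma_add_one (by norm_num : (2:ℝ)/5 ≠ 0)]

lemma stmt13_aux2 :
    Tendsto
      (fun a : ℝ => ∫ v in Set.Ioi (0 : ℝ),
          Real.exp (-v ^ ((5 : ℝ) / 2) * Real.exp (-(a ^ ((4 : ℝ) / 5)) / v)))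
      (nhdsWithin 0 (Set.Ioi 0)) (nhds ((2 / 5) * Real.Gamma (2 / 5))) := by
  rw [← stmt13_aux3]
  refine tendsto_integral_filter_of_dominated_convergence
    (fun v => Real.exp ((1 - v ^ ((5 : ℝ) / 2)) / Real.exp 1)) ?_ ?_ ?_ ?_
  · filter_upwards with a
    exact (Measurable.aestronglyMeasurable (by fun_prop)).restrict
  · filter_upwards [Ioo_mem_nhdsGT_of_mem (by norm_num : (0:ℝ) ∈ Set.Ico 0 1)] with a ha
    filter_upwards [ae_restrict_mem measurableSet_Ioi] with v hv
    have hv0 : (0:ℝ) < v := hv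
    have hc0 : (0:ℝ) < a ^ ((4:ℝ)/5) := Real.rpow_pos_of_pos ha.1 _
    have hc1 : a ^ ((4:ℝ)/5) ≤ 1 :=
      Real.rpow_le_one ha.1.le ha.2.le (by norm_num)
    rw [Real.norm_eq_abs, Real.abs_exp, Real.exp_le_exp]
    rcases le_or_gt v 1 with h1 | h1
    · have hw : v ^ ((5:ℝ)/2) ≤ 1 := Real.rpow_le_one hv0.le h1 (by norm_num)
      have : -v ^ ((5:ℝ)/2) * Real.exp (-(a ^ ((4:ℝ)/5)) / v) ≤ 0 := by
        have := Real.exp_pos (-(a ^ ((4:ℝ)/5)) / v)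
        nlinarith [Real.rpow_nonneg hv0.le ((5:ℝ)/2)]
      have h2 : (0:ℝ) ≤ (1 - v ^ ((5:ℝ)/2)) / Real.exp 1 :=
        div_nonneg (by linarith) (Real.exp_pos 1).le
      linarith
    · have hdiv : a ^ ((4:ℝ)/5) / v ≤ 1 := by
        rw [div_le_one hv0]; linarith
      have hexp : Real.exp (-1) ≤ Real.exp (-(a ^ ((4:ℝ)/5)) / v) := by
        rw [Real.exp_le_exp, neg_div]
        linarith
      set w := v ^ ((5:ℝ)/2) with hwdef
      have hw0 : (0:ℝ) ≤ w := Real.rpow_nonneg hv0.le _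
      have key : -w * Real.exp (-(a ^ ((4:ℝ)/5)) / v)
          ≤ -w * Real.exp (-1) := by nlinarith
      have h2 : -w * Real.exp (-1) ≤ (1 - w) / Real.exp 1 := by
        rw [Real.exp_neg, div_eq_mul_inv]
        have hinv : (0:ℝ) ≤ (Real.exp 1)⁻¹ := by positivity
        nlinarith
      linarith
  · have hint : IntegrableOn
        (fun v : ℝ => v ^ (0:ℝ) * Real.exp (-(Real.exp 1)⁻¹ * v ^ ((5:ℝ)/2)))
        (Set.Ioi 0) :=
      integrableOn_rpow_mul_exp_neg_mul_rpow (by norm_num) (by norm_num)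
        (by positivity)
    simp only [Real.rpow_zero, one_mul] at hint
    have heq : (fun v : ℝ => Real.exp ((1 - v ^ ((5:ℝ)/2)) / Real.exp 1))
        = fun v : ℝ => Real.exp ((Real.exp 1)⁻¹) *
            Real.exp (-(Real.exp 1)⁻¹ * v ^ ((5:ℝ)/2)) := by
      funext v
      rw [← Real.exp_add]
      congr 1
      field_simp
      ring
    rw [heq]
    exact hint.const_mul _
  · filter_upwards [ae_restrict_mem measurableSet_Ioi] with v hv
    have hv0 : (0:ℝ) < v := hv
    have h1 : Tendsto (fun a : ℝ => a ^ ((4:ℝ)/5)) (nhdsWithin 0 (Set.Ioi 0))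
        (nhds 0) := by
      have := (Real.continuousAt_rpow_const 0 ((4:ℝ)/5)
        (Or.inr (by norm_num))).tendsto
      rw [Real.zero_rpow (by norm_num : ((4:ℝ)/5) ≠ 0)] at this
      exact this.mono_left nhdsWithin_le_nhds
    have h2 : Continuous fun c : ℝ =>
        Real.exp (-v ^ ((5:ℝ)/2) * Real.exp (-c / v)) := by fun_prop
    have := (h2.tendsto 0).comp h1
    simpa [Function.comp_def] using this

lemma stmt13_aux1 :
    Tendsto
      (fun a : ℝ => a ^ ((4 : ℝ) / 5) *
        ∫ u in Set.Ioi (0 : ℝ),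
          Real.exp (-(a ^ 2) * u ^ ((5 : ℝ) / 2) * Real.exp (-1 / u)))
      (nhdsWithin 0 (Set.Ioi 0)) (nhds ((2 / 5) * Real.Gamma (2 / 5))) := by
  refine stmt13_aux2.congr' ?_
  filter_upwards [self_mem_nhdsWithin] with a (ha : 0 < a)
  set c : ℝ := a ^ ((4:ℝ)/5) with hc
  have hc0 : 0 < c := Real.rpow_pos_of_pos ha _
  have key : ∫ u in Set.Ioi (0:ℝ),
      Real.exp (-(a ^ 2) * u ^ ((5:ℝ)/2) * Real.exp (-1 / u))
      = ∫ u in Set.Ioi (0:ℝ),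
        (fun v : ℝ => Real.exp (-v ^ ((5:ℝ)/2) * Real.exp (-c / v))) (c * u) := by
    refine setIntegral_congr_fun measurableSet_Ioi fun u hu => ?_
    have hu0 : (0:ℝ) < u := hu
    have h1 : (c * u) ^ ((5:ℝ)/2) = a ^ 2 * u ^ ((5:ℝ)/2) := by
      rw [Real.mul_rpow hc0.le hu0.le, hc, ← Real.rpow_natCast a 2,
        ← Real.rpow_mul ha.le]
      norm_num
    have h2 : -c / (c * u) = -1 / u := by
      field_simp
    simp only [h1, h2]
    ring_nf
  have hsub := integral_comp_mul_left_Ioi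
    (fun v : ℝ => Real.exp (-v ^ ((5:ℝ)/2) * Real.exp (-c / v))) 0 hc0
  rw [mul_zero] at hsub
  rw [key, hsub, smul_eq_mul, ← mul_assoc, mul_inv_cancel₀ hc0.ne', one_mul]

/-- Slow-emission scaling limit of the mean fastest arrival time integral:
`a^(4/5) ∫_0^∞ exp(-a² u^(5/2) e^(-1/u)) du → (2/5) Γ(2/5)` as `a → 0⁺`; equivalently,
after the substitution `u = v / a^(4/5)`,
`∫_0^∞ exp(-v^(5/2) exp(-a^(4/5)/v)) dv → ∫_0^∞ exp(-v^(5/2)) dv = (2/5) Γ(2/5)`. -/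
theorem stmt13 :
    Tendsto
      (fun a : ℝ => a ^ ((4 : ℝ) / 5) *
        ∫ u in Set.Ioi (0 : ℝ),
          Real.exp (-(a ^ 2) * u ^ ((5 : ℝ) / 2) * Real.exp (-1 / u)))
      (nhdsWithin 0 (Set.Ioi 0)) (nhds ((2 / 5) * Real.Gamma (2 / 5))) ∧
    Tendsto
      (fun a : ℝ => ∫ v in Set.Ioi (0 : ℝ),
          Real.exp (-v ^ ((5 : ℝ) / 2) * Real.exp (-(a ^ ((4 : ℝ) / 5)) / v)))
      (nhdsWithin 0 (Set.Ioi 0)) (nhds ((2 / 5) * Real.Gamma (2 / 5))) ∧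
    ∫ v in Set.Ioi (0 : ℝ), Real.exp (-v ^ ((5 : ℝ) / 2)) =
      (2 / 5) * Real.Gamma (2 / 5) := by
  exact ⟨stmt13_aux1, stmt13_aux2, stmt13_aux3⟩
end
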